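/- Let β(s,t) = c₁·s^{a₁}·(t+1)^{-b₁} with c₁, a₁, b₁ > 0, and let ρ̲(s,t) = c₂·s^{a₂}·(t+1)^{-b₂} = ρ̄(s,t) with c₂, a₂, b₂ > 0. If a₂/b₂ ≥ a₁/b₁, then for every K-function π there exists a K-function π′ such that c₁·(3·(π(s)·(t+1)^{b₂}/c₂)^{1/a₂})^{a₁}·(t+1)^{-b₁} ≤ π′(s) for all s, t ≥ 0. -/

import Mathlib

open Set

/-- A K-function: continuous, zero at zero, strictly increasing on `[0, ∞)`. -/
def IsKFun (f : ℝ → ℝ) : Prop :=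
  ContinuousOn f (Set.Ici 0) ∧ f 0 = 0 ∧ StrictMonoOn f (Set.Ici 0)

/-- rational-form key stability condition. With
`β(s,t) = c₁ s^{a₁} (t+1)^{-b₁}` and `ρ̲(s,t) = ρ̄(s,t) = c₂ s^{a₂} (t+1)^{-b₂}`,
if `a₂/b₂ ≥ a₁/b₁` then for every K-function `π` there is a K-function `π'` with
`c₁ (3 (π(s)(t+1)^{b₂}/c₂)^{1/a₂})^{a₁} (t+1)^{-b₁} ≤ π'(s)` for all `s, t ≥ 0`. -/
theorem rational_key_stability (c₁ a₁ b₁ c₂ a₂ b₂ : ℝ)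
    (hc₁ : 0 < c₁) (ha₁ : 0 < a₁) (hb₁ : 0 < b₁)
    (hc₂ : 0 < c₂) (ha₂ : 0 < a₂) (hb₂ : 0 < b₂)
    (hab : a₁ / b₁ ≤ a₂ / b₂) (π : ℝ → ℝ) (hπ : IsKFun π) :
    ∃ π' : ℝ → ℝ, IsKFun π' ∧ ∀ s ≥ (0 : ℝ), ∀ t ≥ (0 : ℝ),
      c₁ * (3 * (π s * (t + 1) ^ b₂ / c₂) ^ (1 / a₂)) ^ a₁ * (t + 1) ^ (-b₁)
        ≤ π' s := by
  obtain ⟨hcont, hzero, hmono⟩ := hπ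
  have hπnn : ∀ s : ℝ, 0 ≤ s → 0 ≤ π s := by
    intro s hs
    rcases eq_or_lt_of_le hs with h | h
    · rw [← h, hzero]
    · rw [← hzero]
      exact (hmono (le_refl (0:ℝ)) hs h).le
  refine ⟨fun s => c₁ * (3 * (π s / c₂) ^ (1 / a₂)) ^ a₁, ⟨?_, ?_, ?_⟩, ?_⟩
  · -- continuity
    apply ContinuousOn.mul continuousOn_const
    apply ContinuousOn.rpow_const
    · exact ContinuousOn.mul continuousOn_const
        (ContinuousOn.rpow_const (hcont.div_const c₂)
          (fun x hx => Or.inr (by positivity)))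
    · intro x hx; exact Or.inr ha₁.le
  · -- zero at zero
    have : ((0:ℝ)/c₂) ^ ((1:ℝ)/a₂) = 0 := by
      rw [zero_div, Real.zero_rpow (by positivity)]
    simp only [hzero, this, mul_zero, Real.zero_rpow ha₁.ne']
  · -- strict mono
    intro x hx y hy hxy
    have h1 : π x < π y := hmono hx hy hxy
    have h2 : (π x / c₂) ^ (1 / a₂) < (π y / c₂) ^ (1 / a₂) :=
      Real.rpow_lt_rpow (div_nonneg (hπnn x hx) hc₂.le) (by gcongr) (by positivity)
    have h3 : (3 * (π x / c₂) ^ (1 / a₂)) ^ a₁ < (3 * (π y / c₂) ^ (1 / a₂)) ^ a₁ := by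
      apply Real.rpow_lt_rpow (mul_nonneg (by norm_num)
        (Real.rpow_nonneg (div_nonneg (hπnn x hx) hc₂.le) _)) (by linarith) ha₁
    exact mul_lt_mul_of_pos_left h3 hc₁
  · -- the inequality
    intro s hs t ht
    have hu : 0 ≤ π s := hπnn s hs
    have hT0 : (0:ℝ) < t + 1 := by linarith
    have hT1 : (1:ℝ) ≤ t + 1 := by linarith
    have hA : (0:ℝ) ≤ π s / c₂ := by positivity
    have key : π s * (t + 1) ^ b₂ / c₂ = (π s / c₂) * (t + 1) ^ b₂ := by ring
    have e1 : (π s * (t + 1) ^ b₂ / c₂) ^ (1 / a₂)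
        = (π s / c₂) ^ (1 / a₂) * (t + 1) ^ (b₂ * (1 / a₂)) := by
      rw [key, Real.mul_rpow hA (Real.rpow_nonneg hT0.le _), ← Real.rpow_mul hT0.le]
    have e2 : (3 * ((π s / c₂) ^ (1 / a₂) * (t + 1) ^ (b₂ * (1 / a₂)))) ^ a₁
        = (3 * (π s / c₂) ^ (1 / a₂)) ^ a₁ * (t + 1) ^ (b₂ * (1 / a₂) * a₁) := by
      rw [← mul_assoc, Real.mul_rpow (by positivity) (Real.rpow_nonneg hT0.le _),
        ← Real.rpow_mul hT0.le]
    rw [e1, e2, mul_assoc, mul_assoc, ← Real.rpow_add hT0]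
    have hexp : b₂ * (1 / a₂) * a₁ + -b₁ ≤ 0 := by
      have h4 : a₁ * b₂ ≤ a₂ * b₁ := by
        rw [div_le_div_iff₀ hb₁ hb₂] at hab
        linarith
      rw [mul_comm, ← mul_assoc]
      have : a₁ * b₂ * (1 / a₂) ≤ b₁ := by
        rw [mul_one_div, div_le_iff₀ ha₂]
        linarith
      linarith
    have hX : 0 ≤ (3 * (π s / c₂) ^ (1 / a₂)) ^ a₁ :=
      Real.rpow_nonneg (mul_nonneg (by norm_num) (Real.rpow_nonneg hA _)) _
    have hle : (t + 1) ^ (b₂ * (1 / a₂) * a₁ + -b₁) ≤ 1 :=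
      Real.rpow_le_one_of_one_le_of_nonpos hT1 hexp
    calc c₁ * ((3 * (π s / c₂) ^ (1 / a₂)) ^ a₁ * (t + 1) ^ (b₂ * (1 / a₂) * a₁ + -b₁))
        ≤ c₁ * ((3 * (π s / c₂) ^ (1 / a₂)) ^ a₁ * 1) :=
          mul_le_mul_of_nonneg_left (mul_le_mul_of_nonneg_left hle hX) hc₁.le
      _ = c₁ * (3 * (π s / c₂) ^ (1 / a₂)) ^ a₁ := by ring
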